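/- arXiv:1412.2693 — 2 statements merged into one kernel-verified Lean document; each statement's English description precedes it below -/
import Mathlib

section
/- Let X be a random vector in ℝⁿ with density p admitting a score function, and consider a one-hidden-layer network y(x) = σ₂(A₂ σ₁(A₁ x)) where σ₁ : ℝᵏ → ℝᵏ is an elementwise continuously differentiable activation, A₁ is k × n, A₂ is m × k, and σ₂ : ℝᵐ → ℝᵐ is continuously differentiable, all satisfying Stein regularity conditions. Then M := E[y(X) (∇ log p(X))ᵀ] = -E[Dσ₂(A₂σ₁(A₁X)) · A₂ · diag(σ₁'(A₁X))] · A₁, where σ₁'(A₁X) is the vector of derivatives of the elementwise activation. In particular, the row space of M is contained in the row space of A₁. -/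
open MeasureTheory Filter

lemma clm_apply_eq_sum_single {k : ℕ} (f : (Fin k → ℝ) →L[ℝ] ℝ) (v : Fin k → ℝ) :
    f v = ∑ q, v q * f (Pi.single q 1) := by
  have hv : v = ∑ q, v q • (Pi.single q 1 : Fin k → ℝ) := by
    funext j
    simp [Finset.sum_apply, Pi.single_apply, Finset.sum_ite_eq, eq_comm]
  conv_lhs => rw [hv]
  rw [map_sum]
  exact Finset.sum_congr rfl fun q _ => by rw [f.map_smul]; simp

lemma fderiv_network {n k m : ℕ} (s : ℝ → ℝ) (σ2 : (Fin m → ℝ) → (Fin m → ℝ))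
    (A1 : Matrix (Fin k) (Fin n) ℝ) (A2 : Matrix (Fin m) (Fin k) ℝ)
    (hs : ContDiff ℝ 1 s) (hσ2 : ContDiff ℝ 1 σ2) (i : Fin m) (j : Fin n) (x : Fin n → ℝ) :
    fderiv ℝ (fun y => σ2 (A2.mulVec fun l => s (A1.mulVec y l)) i) x (Pi.single j 1)
      = ∑ l, ((∑ q, fderiv ℝ (fun v => σ2 v i)
            (A2.mulVec fun r => s (A1.mulVec x r)) (Pi.single q 1) * A2 q l)
          * deriv s (A1.mulVec x l)) * A1 l j := by
  classical
  set L1 : (Fin n → ℝ) →L[ℝ] (Fin k → ℝ) :=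
    LinearMap.toContinuousLinearMap (Matrix.mulVecLin A1) with hL1
  set L2 : (Fin k → ℝ) →L[ℝ] (Fin m → ℝ) :=
    LinearMap.toContinuousLinearMap (Matrix.mulVecLin A2) with hL2
  set Lc : Fin k → ((Fin n → ℝ) →L[ℝ] ℝ) :=
    fun l => (ContinuousLinearMap.proj l).comp L1 with hLc
  set Φ : (Fin n → ℝ) →L[ℝ] (Fin k → ℝ) :=
    ContinuousLinearMap.pi (fun l => deriv s (A1.mulVec x l) • Lc l) with hΦdef
  have hΦ : HasFDerivAt (fun y => (fun l => s (A1.mulVec y l))) Φ x := by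
    rw [hasFDerivAt_pi']
    intro l
    have h1 : HasFDerivAt (fun y : Fin n → ℝ => A1.mulVec y l) (Lc l) x :=
      (Lc l).hasFDerivAt
    have h2 : HasDerivAt s (deriv s (A1.mulVec x l)) (A1.mulVec x l) :=
      (hs.differentiable one_ne_zero (A1.mulVec x l)).hasDerivAt
    have h3 := h2.comp_hasFDerivAt x h1
    have hproj : (ContinuousLinearMap.proj l).comp Φ = deriv s (A1.mulVec x l) • Lc l :=
      ContinuousLinearMap.proj_pi _ l
    rw [hproj]
    exact h3
  set u0 : Fin k → ℝ := fun l => s (A1.mulVec x l) with hu0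
  set w : Fin m → ℝ := A2.mulVec u0 with hw
  set D : (Fin m → ℝ) →L[ℝ] ℝ := fderiv ℝ (fun v => σ2 v i) w with hD
  have hdiff : DifferentiableAt ℝ (fun v => σ2 v i) w := by
    have : Differentiable ℝ σ2 := hσ2.differentiable one_ne_zero
    exact ((ContinuousLinearMap.proj i : (Fin m → ℝ) →L[ℝ] ℝ).differentiableAt).comp w
      (this w)
  have hDd : HasFDerivAt (fun v => σ2 v i) D w := hdiff.hasFDerivAt
  have hg : HasFDerivAt (fun v : Fin k → ℝ => σ2 (A2.mulVec v) i) (D.comp L2) u0 :=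
    by have := hDd.comp u0 L2.hasFDerivAt; exact this
  have htotal : HasFDerivAt (fun y => σ2 (A2.mulVec fun l => s (A1.mulVec y l)) i)
      ((D.comp L2).comp Φ) x := by have := hg.comp x hΦ; exact this
  rw [htotal.fderiv]
  have hΦj : Φ (Pi.single j 1) = fun l => deriv s (A1.mulVec x l) * A1 l j := by
    funext l
    simp [Φ, Lc, L1, ContinuousLinearMap.smul_apply, Matrix.mulVec_single, mul_comm]
  have : ((D.comp L2).comp Φ) (Pi.single j 1) = D (A2.mulVec (Φ (Pi.single j 1))) := rfl
  rw [this, hΦj, clm_apply_eq_sum_single]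
  simp only [Matrix.mulVec, dotProduct, Finset.sum_mul]
  rw [Finset.sum_comm]
  refine Finset.sum_congr rfl fun l _ => ?_
  refine Finset.sum_congr rfl fun q _ => ?_
  ring

/-- Moment factorization for a one-hidden-layer network:
`M = E[y(X) (∇log p(X))ᵀ] = -E[Dσ₂(A₂σ₁(A₁X)) A₂ diag(σ₁'(A₁X))] A₁`, and in particular
the row space of `M` is contained in the row space of `A₁`. -/
theorem one_hidden_layer_moment_factorization (n k m : ℕ)
    (p : (Fin n → ℝ) → ℝ) (s : ℝ → ℝ) (σ2 : (Fin m → ℝ) → (Fin m → ℝ))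
    (A1 : Matrix (Fin k) (Fin n) ℝ) (A2 : Matrix (Fin m) (Fin k) ℝ)
    (μ : Measure (Fin n → ℝ))
    (hμ : μ = volume.withDensity fun x => ENNReal.ofReal (p x))
    (hp : ContDiff ℝ 1 p) (hppos : ∀ x, 0 < p x) (hpint : ∫ x, p x = 1)
    (hs : ContDiff ℝ 1 s) (hσ2 : ContDiff ℝ 1 σ2)
    (M : Matrix (Fin m) (Fin n) ℝ) (B : Matrix (Fin m) (Fin k) ℝ)
    (hM : ∀ i j, M i j = ∫ x,
      σ2 (A2.mulVec fun l => s (A1.mulVec x l)) i *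
        fderiv ℝ (fun y => Real.log (p y)) x (Pi.single j 1) ∂μ)
    (hB : ∀ i l, B i l = ∫ x,
      (∑ q, fderiv ℝ (fun v => σ2 v i) (A2.mulVec fun r => s (A1.mulVec x r)) (Pi.single q 1)
          * A2 q l) * deriv s (A1.mulVec x l) ∂μ)
    -- Stein regularity: the integration-by-parts identity holds for the network output.
    (hStein : ∀ i j, (∫ x,
        σ2 (A2.mulVec fun l => s (A1.mulVec x l)) i *
          fderiv ℝ (fun y => Real.log (p y)) x (Pi.single j 1) ∂μ)
      = -∫ x, fderiv ℝ (fun y => σ2 (A2.mulVec fun l => s (A1.mulVec y l)) i) x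
          (Pi.single j 1) ∂μ)
    (hBint : ∀ i l, Integrable (fun x =>
      (∑ q, fderiv ℝ (fun v => σ2 v i) (A2.mulVec fun r => s (A1.mulVec x r)) (Pi.single q 1)
          * A2 q l) * deriv s (A1.mulVec x l)) μ) :
    M = -(B * A1) ∧
      Submodule.span ℝ (Set.range M) ≤ Submodule.span ℝ (Set.range A1) := by
  have key : M = -(B * A1) := by
    funext i j
    rw [hM, hStein]
    have hint : ∫ x, fderiv ℝ (fun y => σ2 (A2.mulVec fun l => s (A1.mulVec y l)) i) x
        (Pi.single j 1) ∂μ = (B * A1) i j := by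
      have hcongr : ∀ x : Fin n → ℝ,
          fderiv ℝ (fun y => σ2 (A2.mulVec fun l => s (A1.mulVec y l)) i) x (Pi.single j 1)
          = ∑ l, ((∑ q, fderiv ℝ (fun v => σ2 v i)
                (A2.mulVec fun r => s (A1.mulVec x r)) (Pi.single q 1) * A2 q l)
              * deriv s (A1.mulVec x l)) * A1 l j :=
        fun x => fderiv_network s σ2 A1 A2 hs hσ2 i j x
      simp only [hcongr]
      rw [integral_finset_sum _ (fun l _ => (hBint i l).mul_const _)]
      rw [Matrix.mul_apply]
      refine Finset.sum_congr rfl fun l _ => ?_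
      rw [integral_mul_const, hB]
    rw [hint]
    simp [Matrix.neg_apply]
  refine ⟨key, ?_⟩
  rw [Submodule.span_le]
  rintro _ ⟨i, rfl⟩
  have : M i = ∑ l, (-(B i l)) • A1 l := by
    funext j
    rw [key]
    simp [Matrix.mul_apply, Matrix.neg_apply, Finset.sum_apply, neg_mul]
  rw [this]
  exact Submodule.sum_mem _ fun l _ =>
    Submodule.smul_mem _ _ (Submodule.subset_span ⟨l, rfl⟩)
end

section
/- For a depth-d feedforward network y(x) = σ_d(A_d σ_{d-1}(A_{d-1} ⋯ σ₁(A₁x)⋯)) with all activations continuously differentiable, σ₁ elementwise, and input X with density p admitting a score function (with Stein regularity holding), the cross-moment matrix M = E[y(X)(∇ log p(X))ᵀ] factorizes as M = -E[Dσ_d(x̃_d) A_d Dσ_{d-1}(x̃_{d-1}) A_{d-1} ⋯ Dσ₂(x̃₂) A₂ diag(σ₁'(x̃₁))] · A₁, where x̃ᵢ denotes the pre-activation input to layer i. -/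
open MeasureTheory Filter

lemma clm_apply_eq_sum {n : ℕ} (f : (Fin n → ℝ) →L[ℝ] ℝ) (w : Fin n → ℝ) :
    f w = ∑ b, w b * f (Pi.single b 1) := by
  have h : w = ∑ b, w b • (Pi.single b 1 : Fin n → ℝ) := by
    funext j; simp [Pi.single_apply]
  calc f w = f (∑ b, w b • (Pi.single b 1 : Fin n → ℝ)) := by rw [← h]
  _ = ∑ b, w b * f (Pi.single b 1) := by rw [map_sum]; simp [smul_eq_mul]


/-- Moment factorization for a depth-`d+1` feedforward network: the label–score cross-moment
matrix factorizes as `M = -E[Dσ_d(x̃_d) A_d ⋯ Dσ₂(x̃₂) A₂ diag(σ₁'(x̃₁))] A₁`.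
Here `net i` is the output after `i` layers and `P i` is the product of Jacobians of layers
`2, …, i+1` times `diag(σ₁'(A₁ x))`. -/
theorem deep_network_moment_factorization (d : ℕ) (dims : ℕ → ℕ)
    (p : (Fin (dims 0) → ℝ) → ℝ) (s : ℝ → ℝ)
    (A : ∀ i : ℕ, Matrix (Fin (dims (i + 1))) (Fin (dims i)) ℝ)
    (σ : ∀ i : ℕ, (Fin (dims (i + 1)) → ℝ) → (Fin (dims (i + 1)) → ℝ))
    (net : ∀ i : ℕ, (Fin (dims 0) → ℝ) → (Fin (dims i) → ℝ))
    (P : ∀ i : ℕ, (Fin (dims 0) → ℝ) → Matrix (Fin (dims (i + 1))) (Fin (dims 1)) ℝ)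
    (μ : Measure (Fin (dims 0) → ℝ))
    (hμ : μ = volume.withDensity fun x => ENNReal.ofReal (p x))
    (hp : ContDiff ℝ 1 p) (hppos : ∀ x, 0 < p x) (hpint : ∫ x, p x = 1)
    (hs : ContDiff ℝ 1 s) (hσ : ∀ i, ContDiff ℝ 1 (σ i))
    -- the first layer activation is elementwise
    (hσ0 : ∀ v l, σ 0 v l = s (v l))
    -- recursive definition of the network
    (hnet0 : ∀ x, net 0 x = x)
    (hnetstep : ∀ i x, net (i + 1) x = σ i ((A i).mulVec (net i x)))
    -- recursive definition of the product of Jacobians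
    (hP0 : ∀ x, P 0 x = Matrix.diagonal fun l => deriv s ((A 0).mulVec x l))
    (hPstep : ∀ i x, P (i + 1) x =
      (Matrix.of fun a b =>
        fderiv ℝ (fun v => σ (i + 1) v a) ((A (i + 1)).mulVec (net (i + 1) x))
          (Pi.single b 1)) * ((A (i + 1)) * P i x))
    (M : Matrix (Fin (dims (d + 1))) (Fin (dims 0)) ℝ)
    (hM : ∀ i j, M i j = ∫ x,
      net (d + 1) x i * fderiv ℝ (fun y => Real.log (p y)) x (Pi.single j 1) ∂μ)
    -- Stein regularity: the integration-by-parts identity holds for the network output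
    (hStein : ∀ i j, (∫ x,
        net (d + 1) x i * fderiv ℝ (fun y => Real.log (p y)) x (Pi.single j 1) ∂μ)
      = -∫ x, fderiv ℝ (fun y => net (d + 1) y i) x (Pi.single j 1) ∂μ)
    (hPint : ∀ i l, Integrable (fun x => P d x i l) μ) :
    ∀ i j, M i j = -∑ l, (∫ x, P d x i l ∂μ) * A 0 l j := by
  -- key derivative computation
  have key : ∀ i x, ∃ F : (Fin (dims 0) → ℝ) →L[ℝ] (Fin (dims (i + 1)) → ℝ),
      HasFDerivAt (net (i + 1)) F x ∧
      ∀ a j, F (Pi.single j 1) a = ∑ l, P i x a l * A 0 l j := by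
    intro i
    induction i with
    | zero =>
      intro x
      set L : (Fin (dims 0) → ℝ) →L[ℝ] (Fin (dims 1) → ℝ) :=
        LinearMap.toContinuousLinearMap (Matrix.mulVecLin (A 0)) with hL
      have hLapp : ∀ y, L y = (A 0).mulVec y := fun y => by
        simp [hL, Matrix.mulVecLin_apply]
      set D : (Fin (dims 1) → ℝ) →L[ℝ] (Fin (dims 1) → ℝ) :=
        ContinuousLinearMap.pi (fun a =>
          deriv s ((A 0).mulVec x a) • ContinuousLinearMap.proj a) with hD
      refine ⟨D.comp L, ?_, ?_⟩
      · have hne : net 1 = fun y => σ 0 ((A 0).mulVec y) := by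
          funext y; rw [hnetstep, hnet0]
        rw [hne]
        apply hasFDerivAt_pi'.mpr
        intro a
        have hinner : HasFDerivAt (fun y => (A 0).mulVec y a)
            ((ContinuousLinearMap.proj a).comp L) x := by
          have := ((ContinuousLinearMap.proj a (R := ℝ) (φ := fun _ : Fin (dims 1) => ℝ)).comp L).hasFDerivAt (x := x)
          convert this using 2 with y
          all_goals simp [hLapp]
        have hsd : HasDerivAt s (deriv s ((A 0).mulVec x a)) ((A 0).mulVec x a) :=
          ((hs.differentiable one_ne_zero) _).hasDerivAt
        have hcomp := hsd.comp_hasFDerivAt x hinner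
        have heq : (fun y => σ 0 ((A 0).mulVec y) a) = fun y => s ((A 0).mulVec y a) := by
          funext y; rw [hσ0]
        rw [heq]
        convert hcomp using 1
        all_goals (ext v; simp [hD, hLapp, mul_comm])
      · intro a j
        have h1 : (D.comp L) (Pi.single j 1) a
            = deriv s ((A 0).mulVec x a) * ((A 0).mulVec (Pi.single j 1) a) := by
          simp [hD, hLapp]
        rw [h1, hP0]
        simp [Matrix.mulVec_single, Matrix.diagonal_apply, Finset.sum_ite_eq,
          Finset.mem_univ]
    | succ i ih =>
      intro x
      obtain ⟨F, hF, hFp⟩ := ih x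
      set u := (A (i + 1)).mulVec (net (i + 1) x) with hu
      have hσd : DifferentiableAt ℝ (σ (i + 1)) u := (hσ (i + 1)).differentiable one_ne_zero u
      set G : (Fin (dims (i + 2)) → ℝ) →L[ℝ] (Fin (dims (i + 2)) → ℝ) :=
        fderiv ℝ (σ (i + 1)) u with hG
      set L : (Fin (dims (i + 1)) → ℝ) →L[ℝ] (Fin (dims (i + 2)) → ℝ) :=
        LinearMap.toContinuousLinearMap (Matrix.mulVecLin (A (i + 1))) with hL
      have hLapp : ∀ y, L y = (A (i + 1)).mulVec y := fun y => by
        simp [hL, Matrix.mulVecLin_apply]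
      refine ⟨G.comp (L.comp F), ?_, ?_⟩
      · have h1 : HasFDerivAt (fun y => (A (i + 1)).mulVec (net (i + 1) y)) (L.comp F) x := by
          have := L.hasFDerivAt.comp x hF
          exact this
        have h2 := hσd.hasFDerivAt.comp x h1
        have hne : net (i + 2) = fun y => σ (i + 1) ((A (i + 1)).mulVec (net (i + 1) y)) := by
          funext y; rw [hnetstep]
        rw [hne]
        exact h2
      · intro a j
        have hGa : ∀ w, G w a = ∑ b, w b *
            fderiv ℝ (fun v => σ (i + 1) v a) u (Pi.single b 1) := by
          intro w
          have hFd : HasFDerivAt (σ (i + 1)) G u := hσd.hasFDerivAt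
          have hcomp : fderiv ℝ (fun v => σ (i + 1) v a) u
              = (ContinuousLinearMap.proj a).comp G :=
            (hasFDerivAt_pi'.mp hFd a).fderiv
          calc G w a = ((ContinuousLinearMap.proj a (R := ℝ)
                (φ := fun _ : Fin (dims (i + 2)) => ℝ)).comp G) w := rfl
          _ = ∑ b, w b * ((ContinuousLinearMap.proj a).comp G) (Pi.single b 1) :=
              clm_apply_eq_sum _ _
          _ = ∑ b, w b * fderiv ℝ (fun v => σ (i + 1) v a) u (Pi.single b 1) := by
              rw [hcomp]
        have hLHS : (G.comp (L.comp F)) (Pi.single j 1) a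
            = ∑ b, ((A (i + 1)).mulVec (F (Pi.single j 1))) b *
                fderiv ℝ (fun v => σ (i + 1) v a) u (Pi.single b 1) := by
          have : (G.comp (L.comp F)) (Pi.single j 1) = G (L (F (Pi.single j 1))) := rfl
          rw [this, hGa, hLapp]
        rw [hLHS, hPstep]
        simp only [Matrix.mul_apply, Matrix.of_apply, Matrix.mulVec, dotProduct, ← hu,
          Finset.sum_mul, Finset.mul_sum]
        simp_rw [hFp, Finset.mul_sum, Finset.sum_mul]
        conv_rhs => rw [Finset.sum_comm]
        refine Finset.sum_congr rfl fun b _ => ?_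
        conv_rhs => rw [Finset.sum_comm]
        refine Finset.sum_congr rfl fun c _ => ?_
        refine Finset.sum_congr rfl fun l _ => ?_
        ring
  intro i j
  rw [hM, hStein]
  have hfe : ∀ x, fderiv ℝ (fun y => net (d + 1) y i) x (Pi.single j 1)
      = ∑ l, P d x i l * A 0 l j := by
    intro x
    obtain ⟨F, hF, hFp⟩ := key d x
    have hcomp : fderiv ℝ (fun y => net (d + 1) y i) x
        = (ContinuousLinearMap.proj i).comp F := (hasFDerivAt_pi'.mp hF i).fderiv
    rw [hcomp]
    exact hFp i j
  have : (∫ x, fderiv ℝ (fun y => net (d + 1) y i) x (Pi.single j 1) ∂μ)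
      = ∑ l, (∫ x, P d x i l ∂μ) * A 0 l j := by
    rw [show (fun x => fderiv ℝ (fun y => net (d + 1) y i) x (Pi.single j 1))
        = fun x => ∑ l, P d x i l * A 0 l j from funext hfe]
    rw [integral_finset_sum _ (fun l _ => (hPint i l).mul_const _)]
    exact Finset.sum_congr rfl fun l _ => integral_mul_const _ _
  rw [this]
end
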